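/- For $S > 1/2$, the bilinear operator $B_2(u,v)_k = \sum_{k_1+k_2=k,\,k_1,k_2\neq 0} \frac{e^{i3kk_1k_2t}}{k_1k_2} u_{k_1}v_{k_2}$ satisfies $\|B_2(u,v)\|_{\dot H^{-S}} \leq c(S)\|u\|_{\dot H^{-1}}\|v\|_{\dot H^{-1}}$, where $c(S) = \left(\sum_{k\neq 0}|k|^{-2S}\right)^{1/2}$. -/

import Mathlib

open Complex

noncomputable def hnorm (s : ℝ) (u : ℤ → ℂ) : ℝ :=
  (∑' k : ℤ, |(k : ℝ)| ^ (2 * s) * ‖u k‖ ^ 2) ^ ((1 : ℝ) / 2)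

noncomputable def B2 (t : ℝ) (u v : ℤ → ℂ) (k : ℤ) : ℂ :=
  ∑' k1 : ℤ, Complex.exp (Complex.I * (3 * (k : ℂ) * (k1 : ℂ) * ((k : ℂ) - (k1 : ℂ)) * (t : ℂ)))
      / ((k1 : ℂ) * ((k : ℂ) - (k1 : ℂ))) * u k1 * v (k - k1)

/-- Cauchy–Schwarz for tsums of nonnegative sequences. -/
lemma tsum_cs {a b : ℤ → ℝ} (ha : ∀ k, 0 ≤ a k) (hb : ∀ k, 0 ≤ b k)
    (ha2 : Summable fun k => a k ^ 2) (hb2 : Summable fun k => b k ^ 2) :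
    (∑' k, a k * b k) ≤
      Real.sqrt (∑' k, a k ^ 2) * Real.sqrt (∑' k, b k ^ 2) := by
  have hsum : Summable fun k => a k * b k := by
    apply Summable.of_nonneg_of_le (fun k => mul_nonneg (ha k) (hb k))
      (fun k => ?_) ((ha2.add hb2).div_const 2)
    nlinarith [sq_nonneg (a k - b k)]
  refine Summable.tsum_le_of_sum_le hsum fun s => ?_
  have h1 : (∑ i ∈ s, a i * b i) ^ 2 ≤ (∑ i ∈ s, a i ^ 2) * ∑ i ∈ s, b i ^ 2 :=
    Finset.sum_mul_sq_le_sq_mul_sq s a b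
  have h2 : (∑ i ∈ s, a i ^ 2) ≤ ∑' k, a k ^ 2 :=
    Summable.sum_le_tsum s (fun k _ => sq_nonneg _) ha2
  have h3 : (∑ i ∈ s, b i ^ 2) ≤ ∑' k, b k ^ 2 :=
    Summable.sum_le_tsum s (fun k _ => sq_nonneg _) hb2
  have hnn : 0 ≤ ∑ i ∈ s, a i * b i :=
    Finset.sum_nonneg fun i _ => mul_nonneg (ha i) (hb i)
  calc (∑ i ∈ s, a i * b i)
      = Real.sqrt ((∑ i ∈ s, a i * b i) ^ 2) := (Real.sqrt_sq hnn).symm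
    _ ≤ Real.sqrt ((∑' k, a k ^ 2) * ∑' k, b k ^ 2) := by
        apply Real.sqrt_le_sqrt
        calc (∑ i ∈ s, a i * b i) ^ 2 ≤ (∑ i ∈ s, a i ^ 2) * ∑ i ∈ s, b i ^ 2 := h1
          _ ≤ (∑' k, a k ^ 2) * ∑' k, b k ^ 2 := by
              apply mul_le_mul h2 h3 (Finset.sum_nonneg fun i _ => sq_nonneg _)
              exact tsum_nonneg fun k => sq_nonneg _
    _ = Real.sqrt (∑' k, a k ^ 2) * Real.sqrt (∑' k, b k ^ 2) :=
        Real.sqrt_mul (tsum_nonneg fun k => sq_nonneg _) _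

theorem B2_neg_bound (S : ℝ) (hS : 1 / 2 < S) (t : ℝ) (u v : ℤ → ℂ)
    (hu0 : u 0 = 0) (hv0 : v 0 = 0)
    (hu : Summable fun k : ℤ => |(k : ℝ)| ^ (2 * (-1 : ℝ)) * ‖u k‖ ^ 2)
    (hv : Summable fun k : ℤ => |(k : ℝ)| ^ (2 * (-1 : ℝ)) * ‖v k‖ ^ 2) :
    hnorm (-S) (B2 t u v) ≤
      (∑' k : ℤ, |(k : ℝ)| ^ (-(2 * S))) ^ ((1 : ℝ) / 2) * hnorm (-1) u * hnorm (-1) v := by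
  -- the weighted sequences
  set a : ℤ → ℝ := fun k => ‖u k‖ / |(k : ℝ)| with ha_def
  set b : ℤ → ℝ := fun k => ‖v k‖ / |(k : ℝ)| with hb_def
  have ha_nn : ∀ k, 0 ≤ a k := fun k => div_nonneg (norm_nonneg _) (abs_nonneg _)
  have hb_nn : ∀ k, 0 ≤ b k := fun k => div_nonneg (norm_nonneg _) (abs_nonneg _)
  have hsq : ∀ (w : ℤ → ℂ), w 0 = 0 → ∀ k : ℤ,
      (‖w k‖ / |(k : ℝ)|) ^ 2 = |(k : ℝ)| ^ (2 * (-1 : ℝ)) * ‖w k‖ ^ 2 := by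
    intro w hw0 k
    rcases eq_or_ne k 0 with rfl | hk
    · simp [hw0]
    · have hk' : (0 : ℝ) < |(k : ℝ)| := by
        simp only [abs_pos, Int.cast_ne_zero]; exact_mod_cast hk
      rw [show (2 * (-1 : ℝ)) = -(2 : ℕ) by norm_num, Real.rpow_neg (abs_nonneg _),
        Real.rpow_natCast]
      field_simp
  have ha2 : Summable fun k => a k ^ 2 := by
    simpa only [ha_def, hsq u hu0] using hu
  have hb2 : Summable fun k => b k ^ 2 := by
    simpa only [hb_def, hsq v hv0] using hv
  have ha2_eq : (∑' k, a k ^ 2) = ∑' k : ℤ, |(k : ℝ)| ^ (2 * (-1 : ℝ)) * ‖u k‖ ^ 2 := by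
    simp only [ha_def, hsq u hu0]
  have hb2_eq : (∑' k, b k ^ 2) = ∑' k : ℤ, |(k : ℝ)| ^ (2 * (-1 : ℝ)) * ‖v k‖ ^ 2 := by
    simp only [hb_def, hsq v hv0]
  set Mu : ℝ := hnorm (-1) u with hMu
  set Mv : ℝ := hnorm (-1) v with hMv
  have hMu_nn : 0 ≤ Mu := Real.rpow_nonneg (tsum_nonneg fun k =>
    mul_nonneg (Real.rpow_nonneg (abs_nonneg _) _) (sq_nonneg _)) _
  have hMv_nn : 0 ≤ Mv := Real.rpow_nonneg (tsum_nonneg fun k =>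
    mul_nonneg (Real.rpow_nonneg (abs_nonneg _) _) (sq_nonneg _)) _
  have hMu_eq : Mu = Real.sqrt (∑' k, a k ^ 2) := by
    rw [hMu, hnorm, ha2_eq, Real.sqrt_eq_rpow]
  have hMv_eq : Mv = Real.sqrt (∑' k, b k ^ 2) := by
    rw [hMv, hnorm, hb2_eq, Real.sqrt_eq_rpow]
  -- norm of each term of B2
  have hterm : ∀ k k1 : ℤ,
      ‖Complex.exp (Complex.I * (3 * (k : ℂ) * (k1 : ℂ) * ((k : ℂ) - (k1 : ℂ)) * (t : ℂ)))
        / ((k1 : ℂ) * ((k : ℂ) - (k1 : ℂ))) * u k1 * v (k - k1)‖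
        = a k1 * b (k - k1) := by
    intro k k1
    have hexp : ‖Complex.exp (Complex.I *
        (3 * (k : ℂ) * (k1 : ℂ) * ((k : ℂ) - (k1 : ℂ)) * (t : ℂ)))‖ = 1 := by
      rw [show Complex.I * (3 * (k : ℂ) * (k1 : ℂ) * ((k : ℂ) - (k1 : ℂ)) * (t : ℂ))
          = ((3 * (k : ℝ) * (k1 : ℝ) * ((k : ℝ) - (k1 : ℝ)) * t : ℝ) : ℂ) * Complex.I by
        push_cast; ring]
      exact Complex.norm_exp_ofReal_mul_I _
    have h1 : ((k : ℂ) - (k1 : ℂ)) = ((k - k1 : ℤ) : ℂ) := by push_cast; ring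
    rw [norm_mul, norm_mul, norm_div, hexp, h1, norm_mul]
    have h2 : ‖((k1 : ℤ) : ℂ)‖ = |((k1 : ℤ) : ℝ)| := by
      rw [Complex.norm_intCast]
    have h3 : ‖((k - k1 : ℤ) : ℂ)‖ = |((k - k1 : ℤ) : ℝ)| := by
      rw [Complex.norm_intCast]
    rw [h2, h3, ha_def, hb_def]
    simp only [one_div]
    push_cast
    field_simp
  -- summability of the term norms
  have hb2shift : ∀ k : ℤ, Summable fun k1 => b (k - k1) ^ 2 := by
    intro k
    exact ((Equiv.subLeft k).summable_iff (f := fun k1 => b k1 ^ 2)).mpr hb2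
  have hb2shift_eq : ∀ k : ℤ, (∑' k1, b (k - k1) ^ 2) = ∑' k1, b k1 ^ 2 := by
    intro k
    exact (Equiv.subLeft k).tsum_eq (fun k1 => b k1 ^ 2)
  have habsum : ∀ k : ℤ, Summable fun k1 => a k1 * b (k - k1) := by
    intro k
    apply Summable.of_nonneg_of_le (fun k1 => mul_nonneg (ha_nn k1) (hb_nn _))
      (fun k1 => ?_) ((ha2.add (hb2shift k)).div_const 2)
    nlinarith [sq_nonneg (a k1 - b (k - k1))]
  -- pointwise bound on B2
  have hB2 : ∀ k : ℤ, ‖B2 t u v k‖ ≤ Mu * Mv := by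
    intro k
    have h1 : ‖B2 t u v k‖ ≤ ∑' k1, a k1 * b (k - k1) := by
      rw [B2]
      calc ‖∑' k1 : ℤ, Complex.exp (Complex.I *
              (3 * (k : ℂ) * (k1 : ℂ) * ((k : ℂ) - (k1 : ℂ)) * (t : ℂ)))
            / ((k1 : ℂ) * ((k : ℂ) - (k1 : ℂ))) * u k1 * v (k - k1)‖
          ≤ ∑' k1 : ℤ, ‖Complex.exp (Complex.I *
              (3 * (k : ℂ) * (k1 : ℂ) * ((k : ℂ) - (k1 : ℂ)) * (t : ℂ)))
            / ((k1 : ℂ) * ((k : ℂ) - (k1 : ℂ))) * u k1 * v (k - k1)‖ := by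
            apply norm_tsum_le_tsum_norm
            simpa only [hterm k] using habsum k
        _ = ∑' k1, a k1 * b (k - k1) := by simp only [hterm k]
    have h2 : (∑' k1, a k1 * b (k - k1)) ≤
        Real.sqrt (∑' k1, a k1 ^ 2) * Real.sqrt (∑' k1, b (k - k1) ^ 2) :=
      tsum_cs ha_nn (fun k1 => hb_nn _) ha2 (hb2shift k)
    rw [hb2shift_eq k] at h2
    rw [hMu_eq, hMv_eq]
    exact h1.trans h2
  -- final estimate
  have hw : Summable fun k : ℤ => |(k : ℝ)| ^ (-(2 * S)) :=
    Real.summable_abs_int_rpow (by linarith)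
  have hkey : ∀ k : ℤ, |(k : ℝ)| ^ (2 * (-S)) * ‖B2 t u v k‖ ^ 2
      ≤ |(k : ℝ)| ^ (-(2 * S)) * (Mu * Mv) ^ 2 := by
    intro k
    rw [show 2 * (-S) = -(2 * S) by ring]
    apply mul_le_mul_of_nonneg_left _ (Real.rpow_nonneg (abs_nonneg _) _)
    exact pow_le_pow_left₀ (norm_nonneg _) (hB2 k) 2
  have hsummable : Summable fun k : ℤ => |(k : ℝ)| ^ (2 * (-S)) * ‖B2 t u v k‖ ^ 2 := by
    apply Summable.of_nonneg_of_le
      (fun k => mul_nonneg (Real.rpow_nonneg (abs_nonneg _) _) (sq_nonneg _)) hkey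
      (hw.mul_right _)
  have htsum : (∑' k : ℤ, |(k : ℝ)| ^ (2 * (-S)) * ‖B2 t u v k‖ ^ 2)
      ≤ (∑' k : ℤ, |(k : ℝ)| ^ (-(2 * S))) * (Mu * Mv) ^ 2 := by
    rw [← tsum_mul_right]
    exact Summable.tsum_le_tsum hkey hsummable (hw.mul_right _)
  rw [hnorm]
  have hW_nn : 0 ≤ ∑' k : ℤ, |(k : ℝ)| ^ (-(2 * S)) :=
    tsum_nonneg fun k => Real.rpow_nonneg (abs_nonneg _) _
  calc (∑' k : ℤ, |(k : ℝ)| ^ (2 * (-S)) * ‖B2 t u v k‖ ^ 2) ^ ((1 : ℝ) / 2)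
      ≤ ((∑' k : ℤ, |(k : ℝ)| ^ (-(2 * S))) * (Mu * Mv) ^ 2) ^ ((1 : ℝ) / 2) := by
        apply Real.rpow_le_rpow (tsum_nonneg fun k =>
          mul_nonneg (Real.rpow_nonneg (abs_nonneg _) _) (sq_nonneg _)) htsum (by norm_num)
    _ = (∑' k : ℤ, |(k : ℝ)| ^ (-(2 * S))) ^ ((1 : ℝ) / 2) * Mu * Mv := by
        rw [Real.mul_rpow hW_nn (sq_nonneg _), ← Real.rpow_natCast (Mu * Mv) 2,
          ← Real.rpow_mul (mul_nonneg hMu_nn hMv_nn)]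
        norm_num [mul_assoc]
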